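/- Let (γ_n)_{n≥0} be a sequence of real numbers, let T : ℝ[x] → ℝ[x] be the linear operator determined by T[H_n] = γ_n H_n for every n, and let (Q_k)_{k≥0} be the differential coefficients of T. Set g_k*(−1) = Σ_{j=0}^{k} C(k,j) (−1)^{k−j} γ_j. Then for all n, k ∈ ℕ₀: Q_{k+2n+1}^{(k)}(0) = 0 and Q_{k+2n}^{(k)}(0) = ((−1)^n/(n! 2^n)) Σ_{j=0}^{n} C(n,j) · g_{k+n+j}*(−1)/2^{j}. Consequently, with b_{n,m} = Σ_{k=0}^{m} C(m,k) Q_{k+n}^{(k)}(0), one has b_{2n+1,m} = 0 and b_{2n,m} = Σ_{k=0}^{m} C(m,k) ((−1)^n/(n! 2^n)) Σ_{j=0}^{n} C(n,j) g_{k+n+j}*(−1)/2^{j} for all n, m ∈ ℕ₀. -/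

import Mathlib

open Polynomial Finset

noncomputable section

/-- The physicists' Hermite polynomials. -/
def hermitePoly (n : ℕ) : Polynomial ℝ :=
  ∑ k ∈ Finset.range (n / 2 + 1),
    Polynomial.C ((-1 : ℝ) ^ k * n.factorial * 2 ^ (n - 2 * k) /
      (k.factorial * (n - 2 * k).factorial)) * Polynomial.X ^ (n - 2 * k)

/-- The Laguerre polynomials. -/
def laguerrePoly (n : ℕ) : Polynomial ℝ :=
  ∑ k ∈ Finset.range (n + 1),
    Polynomial.C ((-1 : ℝ) ^ k / k.factorial * n.choose k) * Polynomial.X ^ k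

/-- A real polynomial is hyperbolic if all of its complex roots are real
(the zero polynomial counts as hyperbolic). -/
def Hyperbolic (p : Polynomial ℝ) : Prop :=
  p = 0 ∨ ∀ z : ℂ, Polynomial.aeval z p = 0 → z.im = 0

/-- A linear operator on ℝ[x] preserves hyperbolicity. -/
def HypPreserving (T : Polynomial ℝ →ₗ[ℝ] Polynomial ℝ) : Prop :=
  ∀ p : Polynomial ℝ, Hyperbolic p → Hyperbolic (T p)

/-- Classical multiplier sequence. -/
def ClassicalMS (γ : ℕ → ℝ) : Prop :=
  ∃ T : Polynomial ℝ →ₗ[ℝ] Polynomial ℝ,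
    (∀ n, T (Polynomial.X ^ n) = γ n • Polynomial.X ^ n) ∧ HypPreserving T

/-- Hermite multiplier sequence. -/
def HermiteMS (γ : ℕ → ℝ) : Prop :=
  ∃ T : Polynomial ℝ →ₗ[ℝ] Polynomial ℝ,
    (∀ n, T (hermitePoly n) = γ n • hermitePoly n) ∧ HypPreserving T

/-- Laguerre multiplier sequence. -/
def LaguerreMS (γ : ℕ → ℝ) : Prop :=
  ∃ T : Polynomial ℝ →ₗ[ℝ] Polynomial ℝ,
    (∀ n, T (laguerrePoly n) = γ n • laguerrePoly n) ∧ HypPreserving T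

/-- A sequence is trivial if all entries vanish except possibly two at consecutive indices. -/
def TrivialSeq (γ : ℕ → ℝ) : Prop :=
  ∃ m : ℕ, ∀ n, n ≠ m → n ≠ m + 1 → γ n = 0

namespace Hwork

/-- coefficient of `hermitePoly n` at `n - 2k` -/
lemma coeff_eq (n s : ℕ) (hs : 2 * s ≤ n) :
    (hermitePoly n).coeff (n - 2 * s) =
      (-1 : ℝ) ^ s * n.factorial * 2 ^ (n - 2 * s) /
        (s.factorial * (n - 2 * s).factorial) := by
  unfold hermitePoly
  rw [finset_sum_coeff]
  rw [Finset.sum_eq_single s]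
  · simp [coeff_C_mul, coeff_X_pow]
  · intro k hk hne
    simp only [coeff_C_mul, coeff_X_pow]
    have hk' : 2 * k ≤ n := by
      have := Finset.mem_range.mp hk; omega
    have : ¬ (n - 2*s = n - 2*k) := by omega
    rw [if_neg this, mul_zero]
  · intro h
    exact absurd (Finset.mem_range.mpr (by omega)) h

lemma coeff_high (n m : ℕ) (hm : n < m) : (hermitePoly n).coeff m = 0 := by
  unfold hermitePoly
  rw [finset_sum_coeff]
  apply Finset.sum_eq_zero
  intro k hk
  have hk' : 2 * k ≤ n := by have := Finset.mem_range.mp hk; omega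
  simp only [coeff_C_mul, coeff_X_pow]
  have : ¬ (m = n - 2*k) := by omega
  simp [this]

lemma coeff_odd (m s : ℕ) : (hermitePoly (m + 2*s + 1)).coeff m = 0 := by
  unfold hermitePoly
  rw [finset_sum_coeff]
  apply Finset.sum_eq_zero
  intro k hk
  have hk' : 2 * k ≤ m + 2*s + 1 := by have := Finset.mem_range.mp hk; omega
  simp only [coeff_C_mul, coeff_X_pow]
  have : ¬ (m = m + 2*s + 1 - 2*k) := by omega
  simp [this]

lemma coeff_self (n : ℕ) : (hermitePoly n).coeff n = 2 ^ n := by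
  have := coeff_eq n 0 (by omega)
  simp only [Nat.mul_zero, Nat.sub_zero] at this
  rw [this]
  have : (n.factorial : ℝ) ≠ 0 := Nat.cast_ne_zero.mpr n.factorial_ne_zero
  field_simp
  simp

lemma natDegree_le (n : ℕ) : (hermitePoly n).natDegree ≤ n := by
  unfold hermitePoly
  refine (Polynomial.natDegree_sum_le _ _).trans ?_
  rw [Finset.fold_max_le]
  refine ⟨Nat.zero_le _, ?_⟩
  intro k hk
  exact (natDegree_C_mul_le _ _).trans (by simp)

lemma natDegree_eq (n : ℕ) : (hermitePoly n).natDegree = n := by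
  refine le_antisymm (natDegree_le n) ?_
  apply Polynomial.le_natDegree_of_ne_zero
  rw [coeff_self]
  positivity

lemma ne_zero (n : ℕ) : hermitePoly n ≠ 0 := by
  intro h
  have := coeff_self n
  rw [h] at this
  simp at this
  exact absurd this (by positivity)

lemma h_zero : hermitePoly 0 = 1 := by
  unfold hermitePoly
  simp


lemma coeff_val (n m s : ℕ) (h : n = m + 2*s) : (hermitePoly n).coeff m =
    (-1:ℝ)^s * n.factorial * 2^m / (s.factorial * m.factorial) := by
  subst h
  have h := coeff_eq (m+2*s) s (by omega)
  rwa [Nat.add_sub_cancel] at h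

lemma coeff_odd' (n m : ℕ) (h : (n + m) % 2 = 1) : (hermitePoly n).coeff m = 0 := by
  rcases Nat.lt_or_ge n m with hlt | hge
  · exact coeff_high n m hlt
  · obtain ⟨s, hs⟩ : ∃ s, n = m + 2*s + 1 := ⟨(n-m)/2, by omega⟩
    rw [hs]; exact coeff_odd m s

lemma fact_succ_cast (a : ℕ) : ((a+1).factorial : ℝ) = (a+1) * a.factorial := by
  rw [Nat.factorial_succ]; push_cast; ring

lemma fact_ne (a : ℕ) : (a.factorial : ℝ) ≠ 0 := Nat.cast_ne_zero.mpr a.factorial_ne_zero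

lemma fact_pred_cast (m : ℕ) (h : 1 ≤ m) : ((m).factorial : ℝ) = m * (m-1).factorial := by
  have h1 : m - 1 + 1 = m := by omega
  have h2 : ((m-1 : ℕ) : ℝ) + 1 = m := by exact_mod_cast congrArg (Nat.cast (R := ℝ)) h1
  calc ((m).factorial : ℝ) = ((m-1+1).factorial : ℝ) := by rw [h1]
    _ = ((m-1:ℕ) + 1) * (m-1).factorial := fact_succ_cast _
    _ = m * (m-1).factorial := by rw [h2]

lemma X_mul (m : ℕ) :
    (2:ℝ) • (Polynomial.X * hermitePoly m) =
      hermitePoly (m+1) + (2*(m:ℝ)) • hermitePoly (m-1) := by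
  ext d
  simp only [coeff_smul, coeff_add, smul_eq_mul]
  rcases d with _ | e
  · rw [coeff_X_mul_zero, mul_zero]
    rcases Nat.even_or_odd' m with ⟨s, hm | hm⟩
    · -- m even : both terms vanish by parity
      rcases Nat.eq_zero_or_pos m with h0 | h0
      · rw [coeff_odd' (m+1) 0 (by omega)]
        rw [h0]; norm_num
      · rw [coeff_odd' (m+1) 0 (by omega), coeff_odd' (m-1) 0 (by omega)]
        ring
    · -- m odd, m = 2s+1
      rw [coeff_val (m+1) 0 (s+1) (by omega), coeff_val (m-1) 0 s (by omega)]
      have f1 : ((m+1).factorial : ℝ) = (m+1) * (m * (m-1).factorial) := by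
        rw [fact_succ_cast m, fact_pred_cast m (by omega)]
      have hmr : ((m:ℝ)) = 2*s+1 := by rw [hm]; push_cast; ring
      rw [f1, fact_succ_cast s, pow_succ ((-1:ℝ)) s, hmr]
      have := fact_ne s
      have := fact_ne (m-1)
      field_simp
      ring
  · rw [coeff_X_mul]
    rcases Nat.lt_or_ge m e with hlt | hge
    · rw [coeff_high m e hlt, coeff_high (m+1) (e+1) (by omega),
        coeff_high (m-1) (e+1) (by omega)]
      ring
    · rcases Nat.even_or_odd' (m - e) with ⟨s, hp | hp⟩
      · -- m = e + 2s
        have hm : m = e + 2*s := by omega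
        rcases Nat.eq_zero_or_pos s with hs0 | hs0
        · -- m = e
          have hme : m = e := by omega
          rw [coeff_val m e 0 (by omega), coeff_val (m+1) (e+1) 0 (by omega),
            coeff_high (m-1) (e+1) (by omega)]
          rw [fact_succ_cast m, fact_succ_cast e]
          rw [hme]
          norm_num
          field_simp
          ring
        · obtain ⟨s', hs'⟩ : ∃ s', s = s' + 1 := ⟨s - 1, by omega⟩
          subst hs'
          rw [coeff_val m e (s'+1) (by omega), coeff_val (m+1) (e+1) (s'+1) (by omega),
            coeff_val (m-1) (e+1) s' (by omega)]
          rw [fact_succ_cast m, fact_succ_cast e, fact_succ_cast s',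
            fact_pred_cast m (by omega), pow_succ ((-1:ℝ)) s']
          have hmr : ((m:ℝ)) = e + 2*s' + 2 := by rw [hm]; push_cast; ring
          rw [hmr]
          have := fact_ne s'
          have := fact_ne e
          have := fact_ne (m-1)
          field_simp
          ring
      · -- parity odd : all vanish
        rw [coeff_odd' m e (by omega), coeff_odd' (m+1) (e+1) (by omega),
          coeff_odd' (m-1) (e+1) (by omega)]
        ring

lemma deriv_h (n : ℕ) :
    derivative (hermitePoly n) = (2*(n:ℝ)) • hermitePoly (n-1) := by
  ext e
  rw [coeff_derivative, coeff_smul, smul_eq_mul]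
  rcases Nat.even_or_odd' (n + e) with ⟨t, hp | hp⟩
  · -- n + e even: both sides vanish by parity
    rcases Nat.eq_zero_or_pos n with h0 | h0
    · rw [coeff_odd' n (e+1) (by omega), h0]
      norm_num
    · rw [coeff_odd' n (e+1) (by omega), coeff_odd' (n-1) e (by omega)]
      ring
  · rcases Nat.lt_or_ge n (e+1) with hlt | hge
    · rw [coeff_high n (e+1) hlt]
      rcases Nat.eq_zero_or_pos n with h0 | h0
      · rw [h0]; norm_num
      · rw [coeff_high (n-1) e (by omega)]
        ring
    · obtain ⟨s, hs⟩ : ∃ s, n = (e+1) + 2*s := ⟨(n-e-1)/2, by omega⟩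
      rw [coeff_val n (e+1) s (by omega), coeff_val (n-1) e s (by omega)]
      rw [fact_succ_cast e, fact_pred_cast n (by omega), pow_succ (2:ℝ) e]
      have := fact_ne s
      have := fact_ne e
      have := fact_ne (n-1)
      have he : ((e:ℝ)) + 1 ≠ 0 := by positivity
      field_simp

lemma iter_deriv (n k : ℕ) (h : k ≤ n) :
    derivative^[k] (hermitePoly n) =
      ((2^k * n.descFactorial k : ℕ) : ℝ) • hermitePoly (n-k) := by
  induction k with
  | zero => simp
  | succ k ih =>
    rw [Function.iterate_succ_apply', ih (by omega), derivative_smul, deriv_h]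
    rw [smul_smul]
    have h1 : n - k - 1 = n - (k+1) := by omega
    rw [h1]
    congr 1
    rw [Nat.descFactorial_succ]
    push_cast [Nat.sub_sub, Nat.cast_sub (by omega : k ≤ n)]
    ring

lemma iter_deriv_zero (n k : ℕ) (h : n < k) :
    derivative^[k] (hermitePoly n) = 0 :=
  Polynomial.iterate_derivative_eq_zero (by rw [natDegree_eq]; omega)

lemma h_one : hermitePoly 1 = (2:ℝ) • Polynomial.X := by
  have hx := X_mul 0
  simp only [h_zero, mul_one, Nat.cast_zero, mul_zero, zero_smul, add_zero] at hx
  exact hx.symm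

/-- coefficient in the linearization of products of Hermite polynomials -/
def lc (a b i : ℕ) : ℝ := (a.choose i : ℝ) * (b.choose i : ℝ) * (i.factorial : ℝ) * 2^i

lemma key_identity (a b i : ℕ) (hib : i ≤ b+1) :
    lc a (b+1) (i+1) + lc a (b+1) i * (2 * ((a+b+1-2*i : ℕ) : ℝ))
      - 2*((b:ℝ)+1) * lc a b i = lc a (b+2) (i+1) := by
  rcases Nat.lt_or_ge a i with hai | hai
  · unfold lc
    rw [Nat.choose_eq_zero_of_lt hai, Nat.choose_eq_zero_of_lt (by omega : a < i+1)]
    push_cast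
    ring
  · have h1r : ((a.choose (i+1) : ℝ)) * ((i:ℝ)+1) = (a.choose i : ℝ) * ((a:ℝ) - i) := by
      have h := Nat.choose_succ_right_eq a i
      have hc : ((a.choose (i+1) * (i+1) : ℕ) : ℝ) = ((a.choose i * (a - i) : ℕ) : ℝ) := by
        exact_mod_cast h
      rwa [Nat.cast_mul, Nat.cast_mul, Nat.cast_sub hai, Nat.cast_add, Nat.cast_one] at hc
    have h2r : ((b:ℝ)+1) * (b.choose i : ℝ) = ((b+1).choose (i+1) : ℝ) * ((i:ℝ)+1) := by
      have h := Nat.add_one_mul_choose_eq b i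
      have hc : (((b+1) * b.choose i : ℕ) : ℝ) = (((b+1).choose (i+1) * (i+1) : ℕ) : ℝ) := by
        exact_mod_cast h
      rwa [Nat.cast_mul, Nat.cast_mul, Nat.cast_add, Nat.cast_one, Nat.cast_add, Nat.cast_one] at hc
    have h3r : (((b+1).choose (i+1) : ℝ)) * ((i:ℝ)+1) = ((b+1).choose i : ℝ) * ((b:ℝ)+1 - i) := by
      have h := Nat.choose_succ_right_eq (b+1) i
      have hc : (((b+1).choose (i+1) * (i+1) : ℕ) : ℝ) = (((b+1).choose i * (b+1 - i) : ℕ) : ℝ) := by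
        exact_mod_cast h
      rw [Nat.cast_mul, Nat.cast_mul, Nat.cast_sub (by omega : i ≤ b+1), Nat.cast_add,
        Nat.cast_one, Nat.cast_add, Nat.cast_one] at hc
      exact hc
    have pas : (((b+2).choose (i+1)) : ℝ) = ((b+1).choose i : ℝ) + ((b+1).choose (i+1) : ℝ) := by
      have h : (b+2).choose (i+1) = (b+1).choose i + (b+1).choose (i+1) :=
        Nat.choose_succ_succ (b+1) i
      exact_mod_cast h
    unfold lc
    rw [Nat.cast_sub (by omega : 2*i ≤ a+b+1)]
    push_cast
    rw [fact_succ_cast i, pow_succ (2:ℝ) i]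
    linear_combination (-((b+1).choose i : ℝ) * ((i.factorial:ℝ) * 2^i*2)) * h1r +
      (-(a.choose i : ℝ) * ((i.factorial:ℝ) * 2^i*2)) * h2r +
      (-(a.choose i : ℝ) * ((i.factorial:ℝ) * 2^i*2)) * h3r +
      (-((i:ℝ)+1)*(a.choose (i+1) : ℝ) * ((i.factorial:ℝ) * 2^i*2)) * pas

lemma lc_zero (a b : ℕ) : lc a b 0 = 1 := by unfold lc; simp

lemma lc_big (a b i : ℕ) (h : b < i) : lc a b i = 0 := by
  unfold lc; rw [Nat.choose_eq_zero_of_lt h]; simp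

lemma lc_biga (a b i : ℕ) (h : a < i) : lc a b i = 0 := by
  unfold lc; rw [Nat.choose_eq_zero_of_lt h]; simp

lemma linearize (a b : ℕ) : hermitePoly a * hermitePoly b =
    ∑ i ∈ Finset.range (b+1), lc a b i • hermitePoly (a + b - 2*i) := by
  induction b using Nat.twoStepInduction with
  | zero =>
    rw [Finset.sum_range_one, lc_zero, h_zero, mul_one, one_smul]
    have e : a + 0 - 2*0 = a := by omega
    rw [e]
  | one =>
    rw [h_one, mul_smul_comm, mul_comm (hermitePoly a) X, X_mul a,
      Finset.sum_range_succ, Finset.sum_range_one, lc_zero, one_smul]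
    have e1 : a + 1 - 2*1 = a - 1 := by omega
    have e2 : a + 1 - 2*0 = a + 1 := by omega
    have e3 : lc a 1 1 = 2*(a:ℝ) := by
      unfold lc; rw [Nat.choose_one_right]; norm_num; ring
    rw [e1, e2, e3]
  | more b ihb ihb1 =>
    have hx := X_mul (b+1)
    have h2 : (b+1) - 1 = b := by omega
    rw [h2] at hx
    have hx' : hermitePoly (b+2) = (2:ℝ) • (X * hermitePoly (b+1))
        - (2*(((b+1):ℕ):ℝ)) • hermitePoly b := by
      push_cast
      push_cast at hx
      exact (eq_sub_of_add_eq hx.symm)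
    rw [hx', mul_sub, mul_smul_comm, mul_smul_comm,
      mul_left_comm (hermitePoly a) X (hermitePoly (b+1)), ihb1, ihb]
    rw [Finset.mul_sum, Finset.smul_sum, Finset.smul_sum]
    have step1 : ∀ i ∈ Finset.range (b+2),
        (2:ℝ) • (X * (lc a (b+1) i • hermitePoly (a+(b+1)-2*i)))
        = lc a (b+1) i • hermitePoly (a+b+2-2*i)
          + (lc a (b+1) i * (2*((a+b+1-2*i:ℕ):ℝ))) • hermitePoly (a+b-2*i) := by
      intro i hi
      rw [mul_smul_comm, smul_comm, X_mul (a+(b+1)-2*i)]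
      rcases le_or_gt (2*i) (a+b+1) with h | h
      · have e1 : a+(b+1)-2*i+1 = a+b+2-2*i := by omega
        have e2 : a+(b+1)-2*i-1 = a+b-2*i := by omega
        have e3 : a+(b+1)-2*i = a+b+1-2*i := by omega
        rw [e1, e2, e3, smul_add, smul_smul]
      · have hia : a < i := by have := Finset.mem_range.mp hi; omega
        rw [lc_biga a (b+1) i hia]
        simp
    rw [Finset.sum_congr rfl step1, Finset.sum_add_distrib]
    -- handle the subtracted sum: combine scalars and extend range
    have step2 : ∀ i ∈ Finset.range (b+1),
        (2*(((b+1):ℕ):ℝ)) • (lc a b i • hermitePoly (a+b-2*i))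
        = ((2*(((b+1):ℕ):ℝ)) * lc a b i) • hermitePoly (a+b-2*i) := by
      intro i _; rw [smul_smul]
    rw [Finset.sum_congr rfl step2]
    have ext3 : ∑ i ∈ Finset.range (b+2), ((2*(((b+1):ℕ):ℝ)) * lc a b i) • hermitePoly (a+b-2*i)
        = ∑ i ∈ Finset.range (b+1), ((2*(((b+1):ℕ):ℝ)) * lc a b i) • hermitePoly (a+b-2*i) := by
      rw [Finset.sum_range_succ, lc_big a b (b+1) (by omega)]
      simp
    rw [← ext3]
    -- peel i = 0 from first sum
    rw [Finset.sum_range_succ' (fun i => lc a (b+1) i • hermitePoly (a+b+2-2*i)) (b+1)]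
    -- extend the shifted sum from range (b+1) to range (b+2)
    have ext1 : ∑ i ∈ Finset.range (b+2), lc a (b+1) (i+1) • hermitePoly (a+b+2-2*(i+1))
        = ∑ i ∈ Finset.range (b+1), lc a (b+1) (i+1) • hermitePoly (a+b+2-2*(i+1)) := by
      rw [Finset.sum_range_succ, lc_big a (b+1) (b+1+1) (by omega)]
      simp
    rw [← ext1]
    -- peel i = 0 from target
    rw [Finset.sum_range_succ' (fun i => lc a (b+2) i • hermitePoly (a+(b+2)-2*i)) (b+2)]
    have e0 : a+(b+2)-2*0 = a+b+2-2*0 := by omega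
    rw [e0, lc_zero, lc_zero]
    rw [show (∑ i ∈ Finset.range (b+2), lc a (b+1) (i+1) • hermitePoly (a+b+2-2*(i+1))
          + (1:ℝ) • hermitePoly (a+b+2-2*0))
        + ∑ i ∈ Finset.range (b+2), (lc a (b+1) i * (2*((a+b+1-2*i:ℕ):ℝ))) • hermitePoly (a+b-2*i)
        - ∑ i ∈ Finset.range (b+2), ((2*(((b+1):ℕ):ℝ)) * lc a b i) • hermitePoly (a+b-2*i)
        = (∑ i ∈ Finset.range (b+2), lc a (b+1) (i+1) • hermitePoly (a+b+2-2*(i+1))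
          + ∑ i ∈ Finset.range (b+2), (lc a (b+1) i * (2*((a+b+1-2*i:ℕ):ℝ))) • hermitePoly (a+b-2*i)
          - ∑ i ∈ Finset.range (b+2), ((2*(((b+1):ℕ):ℝ)) * lc a b i) • hermitePoly (a+b-2*i))
          + (1:ℝ) • hermitePoly (a+b+2-2*0) from by abel]
    congr 1
    rw [← Finset.sum_add_distrib, ← Finset.sum_sub_distrib]
    refine Finset.sum_congr rfl ?_
    intro i hi
    have e1 : a+b+2-2*(i+1) = a+b-2*i := by omega
    have e2 : a+(b+2)-2*(i+1) = a+b-2*i := by omega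
    rw [e1, e2, ← add_smul, ← sub_smul]
    congr 1
    have hk := key_identity a b i (by have := Finset.mem_range.mp hi; omega)
    push_cast at hk ⊢
    linear_combination hk

lemma alt_choose_real (m : ℕ) :
    ∑ t ∈ Finset.range (m+1), (-1:ℝ)^t * (m.choose t : ℝ) = if m = 0 then 1 else 0 := by
  have h := Int.alternating_sum_range_choose (n := m)
  have h2 : ((∑ i ∈ Finset.range (m+1), (-1:ℤ)^i * m.choose i : ℤ) : ℝ)
      = ((if m = 0 then 1 else 0 : ℤ) : ℝ) := congrArg _ h
  push_cast at h2
  rw [← h2]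

lemma tri_swap {M : Type*} [AddCommMonoid M] (n : ℕ) (f : ℕ → ℕ → M) :
    ∑ q ∈ Finset.range (n+1), ∑ j ∈ Finset.range (q+1), f q j
      = ∑ j ∈ Finset.range (n+1), ∑ q ∈ Finset.range (n+1), if j ≤ q then f q j else 0 := by
  rw [Finset.sum_comm]
  refine Finset.sum_congr rfl ?_
  intro q hq
  have hq' : q ≤ n := by have := Finset.mem_range.mp hq; omega
  have e : Finset.range (q+1) = (Finset.range (n+1)).filter (fun j => j ≤ q) := by
    ext x; simp; omega
  rw [e, Finset.sum_filter]

lemma binom_inv (γ g : ℕ → ℝ)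
    (hg : ∀ k, g k = ∑ j ∈ Finset.range (k + 1), (k.choose j : ℝ) * (-1) ^ (k - j) * γ j)
    (n : ℕ) : ∑ q ∈ Finset.range (n+1), (n.choose q : ℝ) * g q = γ n := by
  have step : ∀ q ∈ Finset.range (n+1), (n.choose q : ℝ) * g q
      = ∑ j ∈ Finset.range (q+1), (n.choose q : ℝ) * ((q.choose j : ℝ) * (-1)^(q-j) * γ j) := by
    intro q _
    rw [hg q, Finset.mul_sum]
  rw [Finset.sum_congr rfl step, tri_swap n
    (fun q j => (n.choose q : ℝ) * ((q.choose j : ℝ) * (-1)^(q-j) * γ j))]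
  have inner : ∀ j ∈ Finset.range (n+1),
      (∑ q ∈ Finset.range (n+1), if j ≤ q then (n.choose q : ℝ) * ((q.choose j : ℝ) * (-1)^(q-j) * γ j) else 0)
      = (if n - j = 0 then 1 else 0) * (n.choose j : ℝ) * γ j := by
    intro j hj
    have hj' : j ≤ n := by have := Finset.mem_range.mp hj; omega
    rw [← Finset.sum_filter]
    have e : (Finset.range (n+1)).filter (fun q => j ≤ q) = Finset.Ico j (n+1) := by
      ext x; simp; omega
    rw [e, Finset.sum_Ico_eq_sum_range]
    have e2 : n + 1 - j = (n - j) + 1 := by omega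
    rw [e2]
    have term : ∀ t ∈ Finset.range ((n-j)+1),
        ((n.choose (j+t) : ℝ) * (((j+t).choose j : ℝ) * (-1)^((j+t)-j) * γ j))
        = ((n.choose j : ℝ) * γ j) * ((-1:ℝ)^t * ((n-j).choose t : ℝ)) := by
      intro t ht
      have ht' : t ≤ n - j := by have := Finset.mem_range.mp ht; omega
      have hc : n.choose (j+t) * (j+t).choose j = n.choose j * (n-j).choose ((j+t)-j) :=
        Nat.choose_mul (by omega)
      have hc2 : (j+t) - j = t := by omega
      rw [hc2] at hc
      have hcr : ((n.choose (j+t) : ℝ)) * ((j+t).choose j : ℝ)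
          = (n.choose j : ℝ) * ((n-j).choose t : ℝ) := by exact_mod_cast hc
      rw [hc2]
      calc (n.choose (j+t) : ℝ) * (((j+t).choose j : ℝ) * (-1)^t * γ j)
          = ((n.choose (j+t) : ℝ) * ((j+t).choose j : ℝ)) * (-1)^t * γ j := by ring
        _ = ((n.choose j : ℝ) * ((n-j).choose t : ℝ)) * (-1)^t * γ j := by rw [hcr]
        _ = ((n.choose j : ℝ) * γ j) * ((-1:ℝ)^t * ((n-j).choose t : ℝ)) := by ring
    rw [Finset.sum_congr rfl term, ← Finset.mul_sum, alt_choose_real (n-j)]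
    ring
  rw [Finset.sum_congr rfl inner]
  rw [Finset.sum_eq_single n]
  · simp
  · intro q hq hqn
    have : ¬ (n - q = 0) := by have := Finset.mem_range.mp hq; omega
    rw [if_neg this]
    ring
  · intro h
    exact absurd (Finset.mem_range.mpr (by omega)) h

/-- the scalar in the expansion of Qe -/
def qc (g : ℕ → ℝ) (k s : ℕ) : ℝ :=
  (-1:ℝ)^s * g (k-s) / (2^(k-s) * (s.factorial : ℝ) * ((k-2*s).factorial : ℝ))

/-- the candidate differential coefficients -/
def Qe (g : ℕ → ℝ) (k : ℕ) : Polynomial ℝ :=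
  ∑ s ∈ Finset.range (k/2+1), qc g k s • hermitePoly (k-2*s)

/-- triple-sum term -/
def FF (g : ℕ → ℝ) (n k s i : ℕ) : Polynomial ℝ :=
  (((2^k * n.descFactorial k : ℕ)) : ℝ) •
    (qc g k s • (lc (k-2*s) (n-k) i • hermitePoly ((k-2*s) + (n-k) - 2*i)))

lemma En (γ g : ℕ → ℝ)
    (hg : ∀ k, g k = ∑ j ∈ Finset.range (k + 1), (k.choose j : ℝ) * (-1) ^ (k - j) * γ j)
    (n : ℕ) :
    ∑ k ∈ Finset.range (n+1),
      (((2^k * n.descFactorial k : ℕ)) : ℝ) • (Qe g k * hermitePoly (n-k))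
      = γ n • hermitePoly n := by
  have step1 : ∀ k ∈ Finset.range (n+1),
      (((2^k * n.descFactorial k : ℕ)) : ℝ) • (Qe g k * hermitePoly (n-k))
      = ∑ s ∈ Finset.range (k/2+1), ∑ i ∈ Finset.range (n-k+1), FF g n k s i := by
    intro k hk
    unfold Qe
    rw [Finset.sum_mul, Finset.smul_sum]
    refine Finset.sum_congr rfl ?_
    intro s hs
    rw [smul_mul_assoc, linearize (k-2*s) (n-k), Finset.smul_sum, Finset.smul_sum]
    rfl
  rw [Finset.sum_congr rfl step1]
  -- reindex the triple sum
  have step2 : ∑ k ∈ Finset.range (n+1), ∑ s ∈ Finset.range (k/2+1),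
        ∑ i ∈ Finset.range (n-k+1), FF g n k s i
      = ∑ q ∈ Finset.range (n+1), ∑ r ∈ Finset.range (n-q+1),
        ∑ s ∈ Finset.range (min q r + 1), FF g n (q+s) s (r-s) := by
    have lhs_eq : ∑ k ∈ Finset.range (n+1), ∑ s ∈ Finset.range (k/2+1),
          ∑ i ∈ Finset.range (n-k+1), FF g n k s i
        = ∑ x ∈ (Finset.range (n+1)).sigma
            (fun k => (Finset.range (k/2+1)).sigma (fun _ => Finset.range (n-k+1))),
            FF g n x.1 x.2.1 x.2.2 := by
      rw [Finset.sum_sigma]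
      refine Finset.sum_congr rfl fun k _ => ?_
      rw [Finset.sum_sigma]
    have rhs_eq : ∑ q ∈ Finset.range (n+1), ∑ r ∈ Finset.range (n-q+1),
          ∑ s ∈ Finset.range (min q r + 1), FF g n (q+s) s (r-s)
        = ∑ y ∈ (Finset.range (n+1)).sigma
            (fun q => (Finset.range (n-q+1)).sigma (fun r => Finset.range (min q r + 1))),
            FF g n (y.1 + y.2.2) y.2.2 (y.2.1 - y.2.2) := by
      rw [Finset.sum_sigma]
      refine Finset.sum_congr rfl fun q _ => ?_
      rw [Finset.sum_sigma]
    rw [lhs_eq, rhs_eq]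
    refine Finset.sum_nbij' (fun x => ⟨x.1 - x.2.1, ⟨x.2.1 + x.2.2, x.2.1⟩⟩)
      (fun y => ⟨y.1 + y.2.2, ⟨y.2.2, y.2.1 - y.2.2⟩⟩) ?_ ?_ ?_ ?_ ?_
    · intro x hx
      simp only [Finset.mem_sigma, Finset.mem_range] at hx ⊢
      omega
    · intro y hy
      simp only [Finset.mem_sigma, Finset.mem_range] at hy ⊢
      omega
    · rintro ⟨k, s, i⟩ hx
      simp only [Finset.mem_sigma, Finset.mem_range] at hx
      simp only [show k - s + s = k from by omega, show s + i - s = i from by omega]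
    · rintro ⟨q, r, s⟩ hy
      simp only [Finset.mem_sigma, Finset.mem_range] at hy
      simp only [show q + s - s = q from by omega, show s + (r - s) = r from by omega]
    · rintro ⟨k, s, i⟩ hx
      simp only [Finset.mem_sigma, Finset.mem_range] at hx
      have e1 : k - s + s = k := by omega
      have e2 : s + i - s = i := by omega
      simp only [e1, e2]
  rw [step2]
  have step3 : ∀ q ∈ Finset.range (n+1), ∀ r ∈ Finset.range (n-q+1),
      ∑ s ∈ Finset.range (min q r + 1), FF g n (q+s) s (r-s)
      = (if r = 0 then ((n.choose q : ℝ) * g q) else 0) • hermitePoly (n - 2*r) := by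
    intro q hq r hr
    have hqn : q ≤ n := by have := Finset.mem_range.mp hq; omega
    have hrn : q + r ≤ n := by have := Finset.mem_range.mp hr; omega
    rcases Nat.lt_or_ge q r with hqr | hqr
    · rw [if_neg (by omega), zero_smul]
      apply Finset.sum_eq_zero
      intro s hs
      have hs' : s ≤ q := by have := Finset.mem_range.mp hs; omega
      unfold FF
      have e1 : (q+s) - 2*s = q - s := by omega
      rw [e1, lc_biga (q-s) _ (r-s) (by omega)]
      simp
    · have hmin : min q r = r := by omega
      rw [hmin]
      have hterm : ∀ s ∈ Finset.range (r+1), FF g n (q+s) s (r-s)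
          = ((2^r * (n.factorial:ℝ) * g q /
              ((r.factorial:ℝ) * ((q-r).factorial:ℝ) * ((n-q-r).factorial:ℝ)))
            * ((-1:ℝ)^s * (r.choose s : ℝ))) • hermitePoly (n-2*r) := by
        intro s hs
        have hs' : s ≤ r := by have := Finset.mem_range.mp hs; omega
        unfold FF qc lc
        have e1 : (q+s) - s = q := by omega
        have e2 : (q+s) - 2*s = q - s := by omega
        have e3 : n - (q+s) = n - q - s := by omega
        have e4 : (q-s) + (n-q-s) - 2*(r-s) = n - 2*r := by omega
        rw [e1, e2, e3, e4, smul_smul, smul_smul]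
        congr 1
        have hdF : ((n.descFactorial (q+s)) : ℝ) = (n.factorial : ℝ) / ((n-q-s).factorial : ℝ) := by
          rw [eq_div_iff (fact_ne _)]
          have hn := Nat.factorial_mul_descFactorial (show q+s ≤ n by omega)
          rw [show n - (q+s) = n-q-s from by omega] at hn
          have hn2 : n.descFactorial (q+s) * (n-q-s).factorial = n.factorial := by
            rw [mul_comm]; exact hn
          exact_mod_cast hn2
        have hc1 : (((q-s).choose (r-s)) : ℝ)
            = ((q-s).factorial : ℝ) / (((r-s).factorial : ℝ) * ((q-r).factorial : ℝ)) := by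
          rw [Nat.cast_choose ℝ (show r-s ≤ q-s by omega),
            show q-s-(r-s) = q-r from by omega]
        have hc2 : (((n-q-s).choose (r-s)) : ℝ)
            = ((n-q-s).factorial : ℝ) / (((r-s).factorial : ℝ) * ((n-q-r).factorial : ℝ)) := by
          rw [Nat.cast_choose ℝ (show r-s ≤ n-q-s by omega),
            show n-q-s-(r-s) = n-q-r from by omega]
        have hc3 : ((r.choose s) : ℝ)
            = (r.factorial : ℝ) / ((s.factorial : ℝ) * ((r-s).factorial : ℝ)) :=
          Nat.cast_choose ℝ hs'
        have hp1 : (2:ℝ)^(q+s) = 2^q * 2^s := by rw [pow_add]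
        have hp2 : (2:ℝ)^r = 2^(r-s) * 2^s := by
          rw [← pow_add]; congr 1; omega
        push_cast [hdF, hc1, hc2, hc3]
        rw [hp1, hp2]
        have n1 := fact_ne s
        have n2 := fact_ne (q-s)
        have n3 := fact_ne (r-s)
        have n4 := fact_ne (q-r)
        have n5 := fact_ne (n-q-r)
        have n6 := fact_ne (n-q-s)
        have n7 := fact_ne r
        field_simp
      rw [Finset.sum_congr rfl hterm, ← Finset.sum_smul, ← Finset.mul_sum, alt_choose_real r]
      rcases eq_or_ne r 0 with h0 | h0
      · subst h0
        rw [if_pos rfl, if_pos rfl]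
        congr 1
        rw [Nat.cast_choose ℝ hqn, show q - 0 = q from by omega,
          show n - q - 0 = n - q from by omega]
        norm_num
        ring
      · rw [if_neg h0, if_neg h0, mul_zero, zero_smul]
  have step4 : ∀ q ∈ Finset.range (n+1),
      ∑ r ∈ Finset.range (n-q+1), ∑ s ∈ Finset.range (min q r + 1), FF g n (q+s) s (r-s)
      = ((n.choose q : ℝ) * g q) • hermitePoly n := by
    intro q hq
    rw [Finset.sum_congr rfl (step3 q hq)]
    rw [Finset.sum_eq_single 0]
    · rw [if_pos rfl, show n - 2*0 = n from by omega]
    · intro r _ hr0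
      rw [if_neg hr0, zero_smul]
    · intro h
      exact absurd (Finset.mem_range.mpr (by omega)) h
  rw [Finset.sum_congr rfl step4, ← Finset.sum_smul, binom_inv γ g hg n]

lemma Q_eq (γ g : ℕ → ℝ)
    (hg : ∀ k, g k = ∑ j ∈ Finset.range (k + 1), (k.choose j : ℝ) * (-1) ^ (k - j) * γ j)
    (T : Polynomial ℝ →ₗ[ℝ] Polynomial ℝ)
    (hT : ∀ n, T (hermitePoly n) = γ n • hermitePoly n)
    (Q : ℕ → Polynomial ℝ)
    (hQ : ∀ p : Polynomial ℝ,
      T p = ∑ k ∈ Finset.range (p.natDegree + 1), Q k * (Polynomial.derivative^[k] p)) :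
    ∀ n, Q n = Qe g n := by
  have system : ∀ (R : ℕ → Polynomial ℝ), (∀ p : Polynomial ℝ,
      T p = ∑ k ∈ Finset.range (p.natDegree + 1), R k * (Polynomial.derivative^[k] p)) →
      ∀ n, γ n • hermitePoly n
        = ∑ k ∈ Finset.range (n+1),
            (((2^k * n.descFactorial k : ℕ)) : ℝ) • (R k * hermitePoly (n-k)) := by
    intro R hR n
    have h := hR (hermitePoly n)
    rw [natDegree_eq, hT n] at h
    rw [h]
    refine Finset.sum_congr rfl ?_
    intro k hk
    have hk' : k ≤ n := by have := Finset.mem_range.mp hk; omega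
    rw [iter_deriv n k hk', mul_smul_comm]
  intro n
  induction n using Nat.strong_induction_on with
  | _ n ih =>
    have h1 := system Q hQ n
    have h2 := En γ g hg n
    have h3 : ∑ k ∈ Finset.range (n+1),
          (((2^k * n.descFactorial k : ℕ)) : ℝ) • (Q k * hermitePoly (n-k))
        = ∑ k ∈ Finset.range (n+1),
          (((2^k * n.descFactorial k : ℕ)) : ℝ) • (Qe g k * hermitePoly (n-k)) :=
      h1.symm.trans h2.symm
    rw [Finset.sum_range_succ, Finset.sum_range_succ] at h3
    have h4 : ∑ k ∈ Finset.range n,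
          (((2^k * n.descFactorial k : ℕ)) : ℝ) • (Q k * hermitePoly (n-k))
        = ∑ k ∈ Finset.range n,
          (((2^k * n.descFactorial k : ℕ)) : ℝ) • (Qe g k * hermitePoly (n-k)) := by
      refine Finset.sum_congr rfl ?_
      intro k hk
      rw [ih k (Finset.mem_range.mp hk)]
    rw [h4] at h3
    have h5 := add_left_cancel h3
    rw [Nat.sub_self, h_zero, mul_one, mul_one] at h5
    have hc : (((2^n * n.descFactorial n : ℕ)) : ℝ) ≠ 0 := by
      have : (0:ℕ) < 2^n * n.descFactorial n := by
        rw [Nat.descFactorial_self]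
        positivity
      exact_mod_cast this.ne'
    exact smul_right_injective (Polynomial ℝ) hc h5

lemma deriv_eval_zero (p : Polynomial ℝ) (k : ℕ) :
    (Polynomial.derivative^[k] p).eval 0 = (k.factorial : ℝ) * p.coeff k := by
  rw [← Polynomial.coeff_zero_eq_eval_zero, Polynomial.coeff_iterate_derivative]
  rw [zero_add, Nat.descFactorial_self, nsmul_eq_mul]

lemma Qe_odd (g : ℕ → ℝ) (k n : ℕ) : (Qe g (k + 2*n + 1)).coeff k = 0 := by
  unfold Qe
  rw [Polynomial.finset_sum_coeff]
  apply Finset.sum_eq_zero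
  intro s hs
  have hs' : 2*s ≤ k + 2*n + 1 := by
    have := Finset.mem_range.mp hs; omega
  rw [Polynomial.coeff_smul, coeff_odd' (k + 2*n + 1 - 2*s) k (by omega), smul_zero]

lemma Qe_even (g : ℕ → ℝ) (k n : ℕ) :
    ((k.factorial : ℝ)) * (Qe g (k + 2*n)).coeff k
      = ((-1) ^ n / ((n.factorial : ℝ) * 2 ^ n)) *
          ∑ j ∈ Finset.range (n + 1), (n.choose j : ℝ) * g (k + n + j) / 2 ^ j := by
  unfold Qe
  rw [Polynomial.finset_sum_coeff]
  have hsub : Finset.range (n+1) ⊆ Finset.range ((k+2*n)/2 + 1) := by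
    intro x hx
    simp only [Finset.mem_range] at hx ⊢
    omega
  rw [← Finset.sum_subset hsub (by
    intro s hs hns
    have h1 : n < s := by
      by_contra hc
      exact hns (Finset.mem_range.mpr (by omega))
    rw [Polynomial.coeff_smul, coeff_high (k+2*n-2*s) k (by
      have := Finset.mem_range.mp hs; omega), smul_zero])]
  set f : ℕ → ℝ := fun j => ((-1:ℝ)^n / ((n.factorial : ℝ) * 2^n)) *
    ((n.choose j : ℝ) * g (k + n + j) / 2^j) with hf
  have hterm : ∀ s ∈ Finset.range (n+1),
      (k.factorial : ℝ) * (qc g (k+2*n) s • hermitePoly (k+2*n-2*s)).coeff k = f (n - s) := by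
    intro s hs
    have hs' : s ≤ n := by have := Finset.mem_range.mp hs; omega
    rw [Polynomial.coeff_smul, coeff_val (k+2*n-2*s) k (n-s) (by omega), smul_eq_mul]
    unfold qc
    rw [hf]
    simp only []
    have hg1 : k + n + (n - s) = k + 2*n - s := by omega
    rw [hg1]
    have hc : ((n.choose (n-s)) : ℝ)
        = (n.factorial : ℝ) / (((n-s).factorial : ℝ) * (s.factorial : ℝ)) := by
      rw [Nat.cast_choose ℝ (show n-s ≤ n by omega), show n-(n-s) = s from by omega]
    have hsgn : ((-1:ℝ))^n = (-1)^(n-s) * (-1)^s := by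
      rw [← pow_add]; congr 1; omega
    have hpw : (2:ℝ)^(k+2*n-s) = 2^k * (2^n * 2^(n-s)) := by
      rw [← pow_add, ← pow_add]; congr 1; omega
    rw [hc, hsgn, hpw]
    have n1 := fact_ne s
    have n2 := fact_ne (n-s)
    have n3 := fact_ne k
    have n4 := fact_ne n
    have n5 := fact_ne (k+2*n-2*s)
    field_simp
  rw [Finset.mul_sum, Finset.sum_congr rfl hterm]
  have hrefl := Finset.sum_range_reflect f (n+1)
  simp only [Nat.add_sub_cancel] at hrefl
  rw [hrefl, hf, ← Finset.mul_sum]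

end Hwork

/-- values of the derivatives at 0 of the differential coefficients of a
Hermite diagonal differential operator, and the resulting eigenvalue families b. -/
theorem stmt_5 (γ : ℕ → ℝ)
    (T : Polynomial ℝ →ₗ[ℝ] Polynomial ℝ)
    (hT : ∀ n, T (hermitePoly n) = γ n • hermitePoly n)
    (Q : ℕ → Polynomial ℝ)
    (hQ : ∀ p : Polynomial ℝ,
      T p = ∑ k ∈ Finset.range (p.natDegree + 1), Q k * (Polynomial.derivative^[k] p))
    (g : ℕ → ℝ)
    (hg : ∀ k, g k = ∑ j ∈ Finset.range (k + 1), (k.choose j : ℝ) * (-1) ^ (k - j) * γ j)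
    (b : ℕ → ℕ → ℝ)
    (hb : ∀ n m, b n m = ∑ k ∈ Finset.range (m + 1),
      (m.choose k : ℝ) * (Polynomial.derivative^[k] (Q (k + n))).eval 0) :
    (∀ n k : ℕ,
      (Polynomial.derivative^[k] (Q (k + 2 * n + 1))).eval 0 = 0 ∧
      (Polynomial.derivative^[k] (Q (k + 2 * n))).eval 0 =
        ((-1) ^ n / (n.factorial * 2 ^ n)) *
          ∑ j ∈ Finset.range (n + 1), (n.choose j : ℝ) * g (k + n + j) / 2 ^ j) ∧
    (∀ n m : ℕ,
      b (2 * n + 1) m = 0 ∧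
      b (2 * n) m = ∑ k ∈ Finset.range (m + 1), (m.choose k : ℝ) *
        (((-1) ^ n / (n.factorial * 2 ^ n)) *
          ∑ j ∈ Finset.range (n + 1), (n.choose j : ℝ) * g (k + n + j) / 2 ^ j)) := by
  have hQe := Hwork.Q_eq γ g hg T hT Q hQ
  have key : ∀ n k : ℕ,
      (Polynomial.derivative^[k] (Q (k + 2 * n + 1))).eval 0 = 0 ∧
      (Polynomial.derivative^[k] (Q (k + 2 * n))).eval 0 =
        ((-1) ^ n / (n.factorial * 2 ^ n)) *
          ∑ j ∈ Finset.range (n + 1), (n.choose j : ℝ) * g (k + n + j) / 2 ^ j := by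
    intro n k
    constructor
    · rw [hQe, Hwork.deriv_eval_zero, Hwork.Qe_odd, mul_zero]
    · rw [hQe, Hwork.deriv_eval_zero]
      exact Hwork.Qe_even g k n
  refine ⟨key, ?_⟩
  intro n m
  constructor
  · rw [hb]
    apply Finset.sum_eq_zero
    intro k _
    rw [show k + (2*n+1) = k + 2*n + 1 from by omega, (key n k).1, mul_zero]
  · rw [hb]
    refine Finset.sum_congr rfl ?_
    intro k _
    rw [show k + 2*n = k + 2*n from rfl, (key n k).2]
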